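/- Let f : ℝ^m → ℝ be twice continuously differentiable with ∇²f Lipschitz continuous with constant C_f > 0 (in the spectral norm). Let Γ ⊆ {1,…,m} and l_f > 0, let u ∈ ℝ^m satisfy Γ(u) ⊆ Γ and ⟨d, ∇²f(u) d⟩ ≥ l_f‖d‖² for all d ∈ ℝ^m with Γ(d) ⊆ Γ, and let β* ∈ ℝ^m satisfy Γ(β*) ⊆ Γ and (∇f(β*))_i = 0 for all i ∈ Γ. Define the Newton iterate v ∈ ℝ^m by (∇²f(u))_{ΓΓ}(v_Γ − u_Γ) = −(∇f(u))_Γ and v_i = 0 for i ∉ Γ (the matrix (∇²f(u))_{ΓΓ} being invertible by the assumption). Then ‖v − β*‖ ≤ (C_f/(2 l_f))‖u − β*‖². -/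

import Mathlib

open Matrix Filter Topology Finset
open scoped RealInnerProductSpace

noncomputable section SCL

/-- the zero "norm" of a vector: the number of its nonzero entries. -/
def zeroNorm {p : ℕ} (x : EuclideanSpace ℝ (Fin p)) : ℕ :=
  {i | x i ≠ 0}.ncard

/-- the `k`-th largest entry in magnitude (`1`-indexed; junk value `0` if `k = 0` or `k > p`). -/
def kthLargestAbs {p : ℕ} (x : EuclideanSpace ℝ (Fin p)) (k : ℕ) : ℝ :=
  ((Finset.univ.val.map fun i => |x i|).sort (· ≤ ·)).getD (p - k) 0

/-- the (set-valued) Euclidean projection onto a set `S`. -/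
def projSet {m : ℕ} (S : Set (EuclideanSpace ℝ (Fin m))) (w : EuclideanSpace ℝ (Fin m)) :
    Set (EuclideanSpace ℝ (Fin m)) :=
  {u | u ∈ S ∧ ∀ v ∈ S, ‖u - w‖ ≤ ‖v - w‖}

/-- the first block `β₁` of `β = (β₁; β₂)`. -/
def part1 {p₁ p₂ : ℕ} (β : EuclideanSpace ℝ (Fin (p₁ + p₂))) : EuclideanSpace ℝ (Fin p₁) :=
  WithLp.toLp 2 (fun i => β (Fin.castAdd p₂ i))

/-- the second block `β₂` of `β = (β₁; β₂)`. -/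
def part2 {p₁ p₂ : ℕ} (β : EuclideanSpace ℝ (Fin (p₁ + p₂))) : EuclideanSpace ℝ (Fin p₂) :=
  WithLp.toLp 2 (fun i => β (Fin.natAdd p₁ i))

/-- the logistic loss `ℓ_log(β; X, y)`. -/
def ellLog {n p : ℕ} (X : Matrix (Fin n) (Fin p) ℝ) (y : Fin n → ℝ)
    (β : EuclideanSpace ℝ (Fin p)) : ℝ :=
  ∑ i, (Real.log (1 + Real.exp (X.mulVec β i)) - y i * X.mulVec β i)

/-- the linear regression loss `ℓ_lin(β; X, y)`. -/
def ellLin {n p : ℕ} (X : Matrix (Fin n) (Fin p) ℝ) (y : Fin n → ℝ)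
    (β : EuclideanSpace ℝ (Fin p)) : ℝ :=
  (1 / 2) * ∑ i, (y i - X.mulVec β i) ^ 2

/-- the SCL objective `f(β₁,β₂) = (1/n) (a ℓ₁(β₁;X,y) + b ℓ₂(β₂;Z,y) + (c/2)‖Xβ₁ − Zβ₂‖²)`,
as a function of the merged vector `β = (β₁; β₂)`. -/
def sclObj {n p₁ p₂ : ℕ}
    (ℓ₁ : Matrix (Fin n) (Fin p₁) ℝ → (Fin n → ℝ) → EuclideanSpace ℝ (Fin p₁) → ℝ)
    (ℓ₂ : Matrix (Fin n) (Fin p₂) ℝ → (Fin n → ℝ) → EuclideanSpace ℝ (Fin p₂) → ℝ)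
    (X : Matrix (Fin n) (Fin p₁) ℝ) (Z : Matrix (Fin n) (Fin p₂) ℝ) (y : Fin n → ℝ)
    (a b c : ℝ) (β : EuclideanSpace ℝ (Fin (p₁ + p₂))) : ℝ :=
  (1 / (n : ℝ)) * (a * ℓ₁ X y (part1 β) + b * ℓ₂ Z y (part2 β)
    + (c / 2) * ∑ i, (X.mulVec (part1 β) i - Z.mulVec (part2 β) i) ^ 2)

/-- the largest eigenvalue of a symmetric matrix, via the Rayleigh quotient. -/
def lambdaMax {ι : Type*} [Fintype ι] (M : Matrix ι ι ℝ) : ℝ :=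
  sSup {r | ∃ v : EuclideanSpace ℝ ι, ‖v‖ = 1 ∧ r = ∑ i, v i * M.mulVec v i}

/-- the smallest eigenvalue of a symmetric matrix, via the Rayleigh quotient. -/
def lambdaMin {ι : Type*} [Fintype ι] (M : Matrix ι ι ℝ) : ℝ :=
  sInf {r | ∃ v : EuclideanSpace ℝ ι, ‖v‖ = 1 ∧ r = ∑ i, v i * M.mulVec v i}

/-- the 2×2 block matrix `[[A, B], [C, D]]`, indexed by `Fin (p₁ + p₂)`. -/
def blockMat {p₁ p₂ : ℕ} (A : Matrix (Fin p₁) (Fin p₁) ℝ) (B : Matrix (Fin p₁) (Fin p₂) ℝ)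
    (C : Matrix (Fin p₂) (Fin p₁) ℝ) (D : Matrix (Fin p₂) (Fin p₂) ℝ) :
    Matrix (Fin (p₁ + p₂)) (Fin (p₁ + p₂)) ℝ :=
  Matrix.reindex finSumFinEquiv finSumFinEquiv (Matrix.fromBlocks A B C D)

/-- a square matrix as a continuous linear map on Euclidean space. -/
def matCLM {ι : Type*} [Fintype ι] [DecidableEq ι] (M : Matrix ι ι ℝ) :
    EuclideanSpace ℝ ι →L[ℝ] EuclideanSpace ℝ ι :=
  LinearMap.toContinuousLinearMap (Matrix.toEuclideanLin M)

/-- `A` is `s`-regular if any `s` of its columns are linearly independent. -/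
def sRegular {n p : ℕ} (A : Matrix (Fin n) (Fin p) ℝ) (s : ℕ) : Prop :=
  ∀ T : Finset (Fin p), T.card = s →
    LinearIndependent ℝ (fun j : {x // x ∈ T} => Aᵀ j.1)

/-- the feasible set `Σ = Σ_{s₁}^{p₁} × Σ_{s₂}^{p₂}` of the SCL problem, in merged form. -/
def feas (p₁ p₂ s₁ s₂ : ℕ) : Set (EuclideanSpace ℝ (Fin (p₁ + p₂))) :=
  {β | zeroNorm (part1 β) ≤ s₁ ∧ zeroNorm (part2 β) ≤ s₂}

/-- `β` is an `α`-stationary point of the SCL problem with objective `f`. -/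
def alphaStat {p₁ p₂ : ℕ} (f : EuclideanSpace ℝ (Fin (p₁ + p₂)) → ℝ) (s₁ s₂ : ℕ) (α : ℝ)
    (β : EuclideanSpace ℝ (Fin (p₁ + p₂))) : Prop :=
  part1 β ∈ projSet {v | zeroNorm v ≤ s₁} (part1 β - α • part1 (gradient f β)) ∧
  part2 β ∈ projSet {v | zeroNorm v ≤ s₂} (part2 β - α • part2 (gradient f β))

end SCL

/-- if `∇²f` is `C_f`-Lipschitz (spectral norm), `∇²f(u)` is positive definite
with constant `l_f` on vectors supported in `Γ`, `Γ(u) ⊆ Γ`, `Γ(β*) ⊆ Γ`, `(∇f(β*))_i = 0` on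
`Γ`, and `v` is the restricted Newton iterate `(∇²f(u))_{ΓΓ}(v_Γ − u_Γ) = −(∇f(u))_Γ`,
`v_{Γᶜ} = 0`, then `‖v − β*‖ ≤ (C_f/(2l_f))‖u − β*‖²`. -/
theorem restricted_newton_quadratic_estimate {m : ℕ}
    (f : EuclideanSpace ℝ (Fin m) → ℝ) (hf : ContDiff ℝ 2 f)
    (Cf : ℝ) (hCf : 0 < Cf)
    (hlip : ∀ x x' : EuclideanSpace ℝ (Fin m),
      ‖fderiv ℝ (gradient f) x - fderiv ℝ (gradient f) x'‖ ≤ Cf * ‖x - x'‖)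
    (Γ : Finset (Fin m)) (lf : ℝ) (hlf : 0 < lf)
    (u : EuclideanSpace ℝ (Fin m)) (husupp : ∀ i, u i ≠ 0 → i ∈ Γ)
    (hpos : ∀ d : EuclideanSpace ℝ (Fin m), (∀ i, d i ≠ 0 → i ∈ Γ) →
      lf * ‖d‖ ^ 2 ≤ ⟪d, (fderiv ℝ (gradient f) u) d⟫)
    (βs : EuclideanSpace ℝ (Fin m))
    (hβsupp : ∀ i, βs i ≠ 0 → i ∈ Γ)
    (hβgrad : ∀ i ∈ Γ, gradient f βs i = 0)
    (v : EuclideanSpace ℝ (Fin m)) (hvsupp : ∀ i, i ∉ Γ → v i = 0)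
    (hnewton : ∀ i ∈ Γ, (fderiv ℝ (gradient f) u) (v - u) i = -(gradient f u i)) :
    ‖v - βs‖ ≤ Cf / (2 * lf) * ‖u - βs‖ ^ 2 := by
  classical
  set H := fderiv ℝ (gradient f) u with hH
  set w : EuclideanSpace ℝ (Fin m) := βs - u with hw
  set d : EuclideanSpace ℝ (Fin m) := v - βs with hd
  set r : EuclideanSpace ℝ (Fin m) := gradient f βs - gradient f u - H w with hr
  -- gradient f is C¹
  have hgrad : ContDiff ℝ 1 (gradient f) := by
    have h1 : ContDiff ℝ 1 (fderiv ℝ f) := hf.fderiv_right (by norm_num)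
    have he : gradient f = fun x =>
        (InnerProductSpace.toDual ℝ (EuclideanSpace ℝ (Fin m))).symm (fderiv ℝ f x) := rfl
    rw [he]
    exact (InnerProductSpace.toDual ℝ _).symm.contDiff.comp h1
  have hgd : Differentiable ℝ (gradient f) := hgrad.differentiable one_ne_zero
  have hcont : Continuous (fderiv ℝ (gradient f)) :=
    (ContDiff.fderiv_right (m := 0) hgrad (by norm_num)).continuous
  -- Taylor estimate
  have key : ‖r‖ ≤ Cf / 2 * ‖w‖ ^ 2 := by
    set φ : ℝ → EuclideanSpace ℝ (Fin m) :=
      fun t => gradient f (u + t • w) - H (u + t • w) with hφdef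
    have hline : ∀ t : ℝ, HasDerivAt (fun s : ℝ => u + s • w) w t := fun t => by
      simpa using ((hasDerivAt_id t).smul_const w).const_add u
    have hφ : ∀ t : ℝ, HasDerivAt φ ((fderiv ℝ (gradient f) (u + t • w) - H) w) t := by
      intro t
      have h1 : HasFDerivAt (gradient f) (fderiv ℝ (gradient f) (u + t • w)) (u + t • w) :=
        (hgd _).hasFDerivAt
      have h2 := h1.comp_hasDerivAt t (hline t)
      have h3 := H.hasFDerivAt.comp_hasDerivAt t (hline t)
      rw [ContinuousLinearMap.sub_apply]
      exact h2.sub h3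
    have hdc : Continuous fun t : ℝ => (fderiv ℝ (gradient f) (u + t • w) - H) w := by
      have hc1 : Continuous fun t : ℝ => fderiv ℝ (gradient f) (u + t • w) :=
        hcont.comp (continuous_const.add (continuous_id.smul continuous_const))
      exact (hc1.sub continuous_const).clm_apply continuous_const
    have hFTC : φ 1 - φ 0 = ∫ t in (0:ℝ)..1, (fderiv ℝ (gradient f) (u + t • w) - H) w :=
      (intervalIntegral.integral_eq_sub_of_hasDerivAt (fun t _ => hφ t)
        (hdc.intervalIntegrable 0 1)).symm
    have hreq : r = φ 1 - φ 0 := by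
      simp only [hφdef, one_smul, zero_smul, add_zero, hr]
      rw [show u + w = βs by rw [hw]; abel]
      rw [map_sub H βs u]
      abel
    have hbound : ∀ t ∈ Set.uIoc (0:ℝ) 1,
        ‖(fderiv ℝ (gradient f) (u + t • w) - H) w‖ ≤ Cf * ‖w‖ ^ 2 * t := by
      intro t ht
      rw [Set.uIoc_of_le (by norm_num)] at ht
      have h1 : ‖fderiv ℝ (gradient f) (u + t • w) - H‖ ≤ Cf * (t * ‖w‖) := by
        have := hlip (u + t • w) u
        rw [hH]
        calc ‖fderiv ℝ (gradient f) (u + t • w) - fderiv ℝ (gradient f) u‖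
            ≤ Cf * ‖u + t • w - u‖ := hlip _ _
          _ = Cf * (t * ‖w‖) := by
              rw [add_sub_cancel_left, norm_smul, Real.norm_eq_abs, abs_of_pos ht.1]
      calc ‖(fderiv ℝ (gradient f) (u + t • w) - H) w‖
          ≤ ‖fderiv ℝ (gradient f) (u + t • w) - H‖ * ‖w‖ :=
            ContinuousLinearMap.le_opNorm _ _
        _ ≤ Cf * (t * ‖w‖) * ‖w‖ := by
            apply mul_le_mul_of_nonneg_right h1 (norm_nonneg _)
        _ = Cf * ‖w‖ ^ 2 * t := by ring
    have hint : (∫ t in (0:ℝ)..1, Cf * ‖w‖ ^ 2 * t) = Cf / 2 * ‖w‖ ^ 2 := by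
      rw [intervalIntegral.integral_const_mul, integral_id]
      ring
    rw [hreq, hFTC]
    calc ‖∫ t in (0:ℝ)..1, (fderiv ℝ (gradient f) (u + t • w) - H) w‖
        ≤ |∫ t in (0:ℝ)..1, Cf * ‖w‖ ^ 2 * t| := by
          apply intervalIntegral.norm_integral_le_abs_of_norm_le
          · exact (MeasureTheory.ae_restrict_iff' measurableSet_uIoc).mpr
              (Filter.Eventually.of_forall hbound)
          · exact Continuous.intervalIntegrable
              ((continuous_const.mul continuous_id)) 0 1
      _ = Cf / 2 * ‖w‖ ^ 2 := by rw [hint, abs_of_nonneg (by positivity)]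
  -- support of d
  have hdsupp : ∀ i, d i ≠ 0 → i ∈ Γ := by
    intro i hi
    by_contra h
    apply hi
    have h1 : v i = 0 := hvsupp i h
    have h2 : βs i = 0 := by by_contra h2; exact h (hβsupp i h2)
    show v i - βs i = 0
    rw [h1, h2, sub_zero]
  -- H d = r on Γ
  have hHd : ∀ i ∈ Γ, H d i = r i := by
    intro i hi
    have h1 : H d = H (v - u) - H w := by
      rw [← map_sub]
      congr 1
      rw [hd, hw]; abel
    have h2 : H d i = H (v - u) i - H w i := by rw [h1]; rfl
    rw [h2, hnewton i hi, hr]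
    show -gradient f u i - H w i = gradient f βs i - gradient f u i - H w i
    rw [hβgrad i hi]; ring
  -- inner product identity
  have hinner : ⟪d, H d⟫ = ⟪d, r⟫ := by
    rw [PiLp.inner_apply, PiLp.inner_apply]
    apply Finset.sum_congr rfl
    intro i _
    by_cases hi : d i = 0
    · simp [hi]
    · rw [hHd i (hdsupp i hi)]
  have main : lf * ‖d‖ ^ 2 ≤ ‖d‖ * (Cf / 2 * ‖w‖ ^ 2) := by
    calc lf * ‖d‖ ^ 2 ≤ ⟪d, H d⟫ := hpos d hdsupp
      _ = ⟪d, r⟫ := hinner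
      _ ≤ ‖d‖ * ‖r‖ := real_inner_le_norm _ _
      _ ≤ ‖d‖ * (Cf / 2 * ‖w‖ ^ 2) := mul_le_mul_of_nonneg_left key (norm_nonneg _)
  have hwnorm : ‖w‖ = ‖u - βs‖ := by rw [hw, norm_sub_rev]
  rw [← hwnorm]
  rcases eq_or_lt_of_le (norm_nonneg d) with h0 | h0
  · rw [← h0]
    positivity
  · rw [div_mul_eq_mul_div, le_div_iff₀ (by positivity)]
    nlinarith [main, h0, norm_nonneg w]
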